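/- Let N ≥ 1, let f_i : ℝ → ℝ for i = 1,…,N be differentiable and strictly convex on ℝ, let d_i > 0, and define g_i(s) = f_i(d_i/s) for s > 0. Then a point s⋆ > 0 is the unique global minimiser of s ↦ Σ_{i=1}^N g_i(s) over (0,∞) — i.e., Σ_i g_i(s) > Σ_i g_i(s⋆) for all s > 0 with s ≠ s⋆ — if and only if Σ_{i=1}^N g_i'(s⋆) = 0. -/

import Mathlib

open Finset

/-- A strictly convex function with zero derivative at a point has a strict
global minimum there. -/
lemma strictConvexOn_strict_min {H : ℝ → ℝ}
    (hc : StrictConvexOn ℝ (Set.univ : Set ℝ) H) {t0 t : ℝ}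
    (h0 : HasDerivAt H 0 t0) (hne : t ≠ t0) : H t0 < H t := by
  rcases lt_or_gt_of_ne hne with h | h
  · -- t < t0 : slope H t t0 < H' t0 = 0
    have hslope := hc.slope_lt_of_hasDerivAt (Set.mem_univ t) (Set.mem_univ t0) h h0
    rw [slope_def_field] at hslope
    have hden : 0 < t0 - t := sub_pos.2 h
    have := (div_neg_iff).mp hslope
    rcases this with ⟨hnum, _⟩ | ⟨hnum, hden'⟩
    · linarith [hnum, hden]
    · linarith
  · -- t0 < t : 0 = H' t0 < slope H t0 t
    have hslope := hc.lt_slope_of_hasDerivAt (Set.mem_univ t0) (Set.mem_univ t) h h0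
    rw [slope_def_field] at hslope
    have hden : 0 < t - t0 := sub_pos.2 h
    have := (div_pos_iff).mp hslope
    rcases this with ⟨hnum, _⟩ | ⟨_, hden'⟩
    · linarith
    · linarith

/-- Proposition 2: `s⋆ > 0` is the unique global minimiser of
`s ↦ ∑ i, g i s` on `(0, ∞)`, where `g i s = f i (d i / s)` with each `f i`
differentiable and strictly convex and `d i > 0`, if and only if
`∑ i, (g i)' s⋆ = 0`. -/
theorem sum_speed_risk_unique_min_iff_deriv_sum_zero
    (N : ℕ) (hN : 1 ≤ N)
    (f : Fin N → ℝ → ℝ)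
    (hfd : ∀ i, Differentiable ℝ (f i))
    (hfc : ∀ i, StrictConvexOn ℝ (Set.univ : Set ℝ) (f i))
    (d : Fin N → ℝ) (hd : ∀ i, 0 < d i)
    (g : Fin N → ℝ → ℝ) (hg : ∀ i s, g i s = f i (d i / s))
    (sstar : ℝ) (hs : 0 < sstar) :
    (∀ s : ℝ, 0 < s → s ≠ sstar → ∑ i, g i s > ∑ i, g i sstar) ↔
      ∑ i, deriv (g i) sstar = 0 := by
  have hg' : ∀ i, g i = fun s => f i (d i / s) := fun i => funext (hg i)
  -- derivative of each `g i` at `sstar`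
  have hder : ∀ i, HasDerivAt (g i)
      (deriv (f i) (d i / sstar) * (d i * -(sstar ^ 2)⁻¹)) sstar := by
    intro i
    rw [hg' i]
    have h1 : HasDerivAt (fun s : ℝ => d i / s) (d i * -(sstar ^ 2)⁻¹) sstar := by
      simpa [div_eq_mul_inv] using (hasDerivAt_inv hs.ne').const_mul (d i)
    exact ((hfd i (d i / sstar)).hasDerivAt.comp sstar h1)
  have hderiv_eq : ∀ i, deriv (g i) sstar =
      deriv (f i) (d i / sstar) * (d i * -(sstar ^ 2)⁻¹) := fun i => (hder i).deriv
  -- the sum function and its derivative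
  set G : ℝ → ℝ := fun s => ∑ i, g i s with hG
  have hGder : HasDerivAt G (∑ i, deriv (f i) (d i / sstar) * (d i * -(sstar ^ 2)⁻¹)) sstar :=
    HasDerivAt.fun_sum fun i _ => hder i
  -- auxiliary function H
  set H : ℝ → ℝ := fun t => ∑ i, f i (d i * t) with hH
  have huniv : (Finset.univ : Finset (Fin N)).Nonempty := by
    rw [Finset.univ_nonempty_iff]
    exact Fin.pos_iff_nonempty.mp hN
  have hHconv : StrictConvexOn ℝ (Set.univ : Set ℝ) H := by
    refine ⟨convex_univ, ?_⟩
    intro x _ y _ hxy a b ha hb hab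
    have : ∀ i ∈ Finset.univ, f i (d i * (a • x + b • y)) <
        a • f i (d i * x) + b • f i (d i * y) := by
      intro i _
      have hne : d i * x ≠ d i * y :=
        fun h => hxy (mul_left_cancel₀ (hd i).ne' h)
      have := (hfc i).2 (Set.mem_univ (d i * x)) (Set.mem_univ (d i * y)) hne ha hb hab
      simpa [smul_eq_mul, mul_add, mul_comm, mul_left_comm] using this
    calc H (a • x + b • y) = ∑ i, f i (d i * (a • x + b • y)) := rfl
      _ < ∑ i, (a • f i (d i * x) + b • f i (d i * y)) :=
          Finset.sum_lt_sum_of_nonempty huniv this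
      _ = a • H x + b • H y := by
          simp [hH, Finset.sum_add_distrib, Finset.mul_sum, smul_eq_mul]
  have hGH : ∀ s : ℝ, 0 < s → G s = H s⁻¹ := by
    intro s hspos
    simp only [hG, hH]
    refine Finset.sum_congr rfl fun i _ => ?_
    rw [hg i s, div_eq_mul_inv]
  have hHder : HasDerivAt H (∑ i, deriv (f i) (d i / sstar) * d i) sstar⁻¹ := by
    apply HasDerivAt.fun_sum
    intro i _
    have h1 : HasDerivAt (fun t : ℝ => d i * t) (d i) sstar⁻¹ := by
      simpa using (hasDerivAt_id sstar⁻¹).const_mul (d i)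
    have h2 := ((hfd i (d i * sstar⁻¹)).hasDerivAt.comp sstar⁻¹ h1)
    have hds : d i * sstar⁻¹ = d i / sstar := (div_eq_mul_inv _ _).symm
    rw [hds] at h2
    exact h2
  have hfactor : ∑ i, deriv (g i) sstar =
      -(sstar ^ 2)⁻¹ * ∑ i, deriv (f i) (d i / sstar) * d i := by
    rw [Finset.mul_sum]
    refine Finset.sum_congr rfl fun i _ => ?_
    rw [hderiv_eq i]; ring
  have hsq : (-(sstar ^ 2)⁻¹ : ℝ) ≠ 0 := neg_ne_zero.2 (inv_ne_zero (pow_ne_zero 2 hs.ne'))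
  constructor
  · -- unique minimiser ⇒ derivative sum is zero
    intro hmin
    have hloc : IsLocalMin G sstar := by
      filter_upwards [Ioi_mem_nhds hs] with s hspos
      rcases eq_or_ne s sstar with rfl | hne
      · exact le_refl _
      · exact le_of_lt (hmin s hspos hne)
    have := hloc.deriv_eq_zero
    rw [hGder.deriv] at this
    calc ∑ i, deriv (g i) sstar
        = ∑ i, deriv (f i) (d i / sstar) * (d i * -(sstar ^ 2)⁻¹) :=
          Finset.sum_congr rfl fun i _ => hderiv_eq i
      _ = 0 := this
  · -- derivative sum zero ⇒ unique minimiser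
    intro hzero s hspos hne
    have hA : ∑ i, deriv (f i) (d i / sstar) * d i = 0 := by
      rw [hfactor] at hzero
      exact (mul_eq_zero.mp hzero).resolve_left hsq
    have hH0 : HasDerivAt H 0 sstar⁻¹ := by rw [← hA]; exact hHder
    have hinv_ne : s⁻¹ ≠ sstar⁻¹ := fun h =>
      hne (by rw [← inv_inv s, h, inv_inv])
    have := strictConvexOn_strict_min hHconv hH0 hinv_ne
    show G s > G sstar
    rw [hGH s hspos, hGH sstar hs]
    exact this
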